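/- Let N ≥ 0 be an integer and let ℓ_0, …, ℓ_N be positive integers. Let η_{-1}, η_0, …, η_{N+1} be nonnegative integers satisfying η_{j+1} = η_{j-1} + ℓ_j η_j for 0 ≤ j ≤ N, with either (η_{-1}, η_0) = (0, 1) or (η_{-1}, η_0) = (1, 0). Then for every 0 ≤ k ≤ N one has ℓ_k · (Σ_{j=0}^k ℓ_j η_j²) ≤ η_{k+1}²; in particular, if ℓ_N ≥ 2 then Σ_{j=0}^N ℓ_j η_j² ≤ (1/2) η_{N+1}². -/

import Mathlib

/-- **Lemma 2.17 (le:est).** Let `η` (shifted: Lean's `η 0` is the paper's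
`η₋₁` and `η (j+1)` is the paper's `η_j`) satisfy `η_{j+1} = η_{j−1} + ℓ_j η_j`
for `0 ≤ j ≤ N`, with initial condition `(η₋₁, η₀) = (0,1)` or `(1,0)`.
Then for all `0 ≤ k ≤ N`, `ℓ_k · Σ_{j=0}^k ℓ_j η_j² ≤ η_{k+1}²`; in particular,
if `ℓ_N ≥ 2` then `Σ_{j=0}^N ℓ_j η_j² ≤ ½ η_{N+1}²`. -/
theorem stmt_6 (N : ℕ) (ℓ : ℕ → ℕ) (hℓ : ∀ j ≤ N, 0 < ℓ j)
    (η : ℕ → ℕ)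
    (hinit : (η 0 = 0 ∧ η 1 = 1) ∨ (η 0 = 1 ∧ η 1 = 0))
    (hrec : ∀ j ≤ N, η (j + 2) = η j + ℓ j * η (j + 1)) :
    (∀ k ≤ N,
      ℓ k * ∑ j ∈ Finset.range (k + 1), ℓ j * (η (j + 1)) ^ 2 ≤ (η (k + 2)) ^ 2) ∧
    (2 ≤ ℓ N →
      2 * ∑ j ∈ Finset.range (N + 1), ℓ j * (η (j + 1)) ^ 2 ≤ (η (N + 2)) ^ 2) := by
  have key : ∀ k ≤ N,
      ∑ j ∈ Finset.range (k + 1), ℓ j * (η (j + 1)) ^ 2 = η (k + 1) * η (k + 2) := by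
    intro k hk
    induction k with
    | zero =>
        rw [Finset.sum_range_one]
        rw [hrec 0 (Nat.zero_le N)]
        rcases hinit with ⟨h0, h1⟩ | ⟨h0, h1⟩ <;> rw [h0, h1] <;> ring
    | succ n ih =>
        rw [Finset.sum_range_succ, ih (Nat.le_of_succ_le hk),
          hrec (n + 1) hk]
        ring
  have bound : ∀ k ≤ N, ℓ k * η (k + 1) ≤ η (k + 2) := by
    intro k hk
    rw [hrec k hk]
    exact Nat.le_add_left _ _
  constructor
  · intro k hk
    rw [key k hk]
    calc ℓ k * (η (k + 1) * η (k + 2)) = (ℓ k * η (k + 1)) * η (k + 2) := by ring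
    _ ≤ η (k + 2) * η (k + 2) := Nat.mul_le_mul_right _ (bound k hk)
    _ = η (k + 2) ^ 2 := (sq _).symm
  · intro h2
    rw [key N le_rfl]
    calc 2 * (η (N + 1) * η (N + 2)) = (2 * η (N + 1)) * η (N + 2) := by ring
    _ ≤ (ℓ N * η (N + 1)) * η (N + 2) :=
        Nat.mul_le_mul_right _ (Nat.mul_le_mul_right _ h2)
    _ ≤ η (N + 2) * η (N + 2) := Nat.mul_le_mul_right _ (bound N le_rfl)
    _ = η (N + 2) ^ 2 := (sq _).symm
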